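/- If A is a nearly convex subset of a Euclidean space, then interior A = interior (convex hull of A) = interior (closure of A). -/

import Mathlib

variable {X : Type*} [NormedAddCommGroup X] [InnerProductSpace ℝ X] [FiniteDimensional ℝ X]

def NearlyEqual (A B : Set X) : Prop :=
  closure A = closure B ∧ intrinsicInterior ℝ A = intrinsicInterior ℝ B

def NearlyConvex (A : Set X) : Prop :=
  ∃ C : Set X, Convex ℝ C ∧ C ⊆ A ∧ A ⊆ closure C

lemma aux_interior_closure (C : Set X) (hC : Convex ℝ C) :
    interior (closure C) = interior C := by
  rcases Set.eq_empty_or_nonempty (interior C) with he | ⟨z, hz⟩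
  · have hspan : affineSpan ℝ C ≠ ⊤ := by
      intro h
      exact (Set.not_nonempty_empty (he ▸ hC.interior_nonempty_iff_affineSpan_eq_top.2 h))
    have hspan' : affineSpan ℝ (closure C) = affineSpan ℝ C := by
      apply le_antisymm
      · exact affineSpan_le.2 (closure_minimal (subset_affineSpan ℝ C)
          (affineSpan ℝ C).closed_of_finiteDimensional)
      · exact affineSpan_mono ℝ subset_closure
    rw [he, Set.eq_empty_iff_forall_notMem]
    intro x hx
    exact hspan (hspan' ▸ hC.closure.interior_nonempty_iff_affineSpan_eq_top.1 ⟨x, hx⟩)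
  · apply le_antisymm
    · intro x hx
      obtain ⟨ε, hε, hball⟩ := Metric.isOpen_iff.1 isOpen_interior x hx
      -- choose small δ so that x + δ • (x - z) ∈ ball x ε
      rcases eq_or_ne x z with rfl | hxz
      · exact hz
      set d := ‖x - z‖ with hd
      have hd0 : 0 < d := by
        simpa [hd] using sub_ne_zero.2 hxz
      set δ := ε / (2 * d) with hδdef
      have hδ : 0 < δ := by positivity
      have hy : x + δ • (x - z) ∈ closure C := by
        apply interior_subset
        apply hball
        simp only [Metric.mem_ball, dist_eq_norm]
        have : ‖x + δ • (x - z) - x‖ = δ * d := by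
          simp [norm_smul, abs_of_pos hδ, hd]
        rw [this, hδdef, div_mul_eq_mul_div, div_lt_iff₀ (by positivity)]
        nlinarith
      clear hδdef hball
      clear_value δ
      have hcombo : (δ / (1 + δ)) • z + (1 / (1 + δ)) • (x + δ • (x - z)) = x := by
        have h1δ : (1 : ℝ) + δ ≠ 0 := by positivity
        match_scalars <;> field_simp <;> ring
      have := hC.combo_interior_closure_mem_interior hz hy
        (a := δ / (1 + δ)) (b := 1 / (1 + δ)) (by positivity) (by positivity)
        (by field_simp; ring)
      rwa [hcombo] at this
    · exact interior_mono subset_closure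

theorem interior_eq_of_nearlyConvex (A : Set X) (h : NearlyConvex A) :
    interior A = interior (convexHull ℝ A) ∧
    interior A = interior (closure A) := by
  obtain ⟨C, hC, hCA, hAC⟩ := h
  have hclos : closure A = closure C :=
    le_antisymm (closure_minimal hAC isClosed_closure) (closure_mono hCA)
  have hIC : interior A = interior C := by
    apply le_antisymm
    · calc interior A ⊆ interior (closure C) := interior_mono hAC
        _ = interior C := aux_interior_closure C hC
    · exact interior_mono hCA
  have hhull : interior (convexHull ℝ A) = interior C := by
    apply le_antisymm
    · have : convexHull ℝ A ⊆ closure C :=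
        convexHull_min hAC hC.closure
      calc interior (convexHull ℝ A) ⊆ interior (closure C) := interior_mono this
        _ = interior C := aux_interior_closure C hC
    · exact interior_mono (hCA.trans (subset_convexHull ℝ A))
  refine ⟨by rw [hIC, hhull], ?_⟩
  rw [hIC, hclos, aux_interior_closure C hC]
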